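/- Let F be a field, 1 ≤ k ≤ n−1, let G be a generator matrix of an [n,k] MDS code over F and H a corresponding parity-check matrix. If S is a nonempty proper subset of the n coordinates, then G · diag(1_S) · Hᵀ ≠ 0; that is, the (rep, 1_S)-retrieval scheme downloads nontrivial information. -/

import Mathlib

open Matrix Module

/-- Rank is subadditive. -/
lemma aux_rank_add {F : Type*} [Field F] {m n : Type*} [Fintype n] [Fintype m]
    (A B : Matrix m n F) : (A + B).rank ≤ A.rank + B.rank := by
  have hle : LinearMap.range (A + B).mulVecLin ≤
      LinearMap.range A.mulVecLin ⊔ LinearMap.range B.mulVecLin := by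
    rintro _ ⟨x, rfl⟩
    rw [Matrix.mulVecLin_add]
    exact Submodule.mem_sup.2 ⟨_, ⟨x, rfl⟩, _, ⟨x, rfl⟩, rfl⟩
  exact (Submodule.finrank_mono hle).trans
    (Submodule.finrank_add_le_finrank_add_finrank _ _)

/-- For an MDS generator matrix `G`, multiplying by a diagonal matrix that is `1`
on a set `W` keeps rank at least `min k |W|`. -/
lemma aux_rank_ge {F : Type*} [Field F] {n k : ℕ}
    (G : Matrix (Fin k) (Fin n) F)
    (hMDS : ∀ s : Finset (Fin n), s.card = k →
      LinearIndependent F (fun j : s => G.transpose j.val))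
    (hkn : k ≤ n) (W : Finset (Fin n)) (d : Fin n → F)
    (hd : ∀ j ∈ W, d j = 1) :
    min k W.card ≤ (G * Matrix.diagonal d).rank := by
  obtain ⟨U, hUW, hUcard⟩ := Finset.exists_subset_card_eq (min_le_right k W.card)
  obtain ⟨T, hUT, hTcard⟩ := Finset.exists_superset_card_eq (s := U) (n := k)
    (by rw [hUcard]; exact min_le_left _ _) (by simpa using hkn)
  have hli := hMDS T hTcard
  have hinj : Function.Injective (fun j : U => (⟨j.val, hUT j.2⟩ : T)) := by
    intro a b hab
    simp only [Subtype.mk.injEq] at hab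
    exact Subtype.ext hab
  have hliU : LinearIndependent F (fun j : U => G.transpose j.val) := by
    have := hli.comp _ hinj
    exact this
  have hcoleq : (fun j : U => (G * Matrix.diagonal d).transpose j.val)
      = fun j : U => G.transpose j.val := by
    funext j
    funext i
    simp only [Matrix.transpose_apply, Matrix.mul_diagonal]
    rw [hd j.val (hUW j.2), mul_one]
  have hliU' : LinearIndependent F
      (fun j : U => (G * Matrix.diagonal d).transpose j.val) := by
    rw [hcoleq]; exact hliU
  rw [Matrix.rank_eq_finrank_span_cols]
  have hsub : Submodule.span F (Set.range (fun j : U =>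
      (G * Matrix.diagonal d).transpose j.val)) ≤
      Submodule.span F (Set.range (G * Matrix.diagonal d).transpose) := by
    apply Submodule.span_mono
    rintro _ ⟨j, rfl⟩
    exact ⟨j.val, rfl⟩
  have := Submodule.finrank_mono hsub
  rw [finrank_span_eq_card hliU', Fintype.card_coe, hUcard] at this
  exact this

theorem stmt_7 (F : Type*) [Field F] (n k : ℕ) (hk1 : 1 ≤ k) (hk2 : k ≤ n - 1)
    (G : Matrix (Fin k) (Fin n) F) (H : Matrix (Fin (n - k)) (Fin n) F)
    (hMDS : ∀ s : Finset (Fin n), s.card = k →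
      LinearIndependent F (fun j : s => G.transpose j.val))
    (hH : H.rank = n - k) (hGH : G * H.transpose = 0)
    (S : Finset (Fin n)) (hS : S.Nonempty) (hSne : S ≠ Finset.univ) :
    G * Matrix.diagonal (fun i => if i ∈ S then (1 : F) else 0) * H.transpose ≠ 0 := by
  intro h0
  obtain ⟨i0, _⟩ := hS
  have hn : 1 ≤ n := i0.pos
  have hkn : k ≤ n := by omega
  set d1 : Fin n → F := fun i => if i ∈ S then (1 : F) else 0 with hd1
  set d2 : Fin n → F := fun i => if i ∈ S then (0 : F) else 1 with hd2
  set Dm := Matrix.diagonal d1 with hDm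
  set Dm' := Matrix.diagonal d2 with hDm'
  -- basic diagonal identities
  have hsum : Dm + Dm' = 1 := by
    rw [hDm, hDm', Matrix.diagonal_add, ← Matrix.diagonal_one]
    have : (fun i => d1 i + d2 i) = fun _ : Fin n => (1 : F) := by
      funext i
      by_cases h : i ∈ S <;> simp [hd1, hd2, h]
    rw [this]
  have hprod : Dm * Dm' = 0 := by
    rw [hDm, hDm', Matrix.diagonal_mul_diagonal, ← Matrix.diagonal_zero]
    have : (fun i => d1 i * d2 i) = fun _ : Fin n => (0 : F) := by
      funext i
      by_cases h : i ∈ S <;> simp [hd1, hd2, h]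
    rw [this]
  have hprod' : Dm' * Dm = 0 := by
    rw [hDm, hDm', Matrix.diagonal_mul_diagonal, ← Matrix.diagonal_zero]
    have : (fun i => d2 i * d1 i) = fun _ : Fin n => (0 : F) := by
      funext i
      by_cases h : i ∈ S <;> simp [hd1, hd2, h]
    rw [this]
  -- rows of matrix products
  have hrow : ∀ {m p : Type} [Fintype m] (M : Matrix (Fin k) m F)
      (N : Matrix m p F) (i : Fin k), (M * N) i = M i ᵥ* N := by
    intro m p _ M N i
    funext j
    simp [Matrix.mul_apply, Matrix.vecMul, dotProduct]
  -- rank of G is k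
  have hGrank : G.rank = k := by
    have h1 : G.rank ≤ k := by
      simpa using G.rank_le_card_height
    have h2 : min k ((Finset.univ : Finset (Fin n)).card) ≤
        (G * Matrix.diagonal (fun _ : Fin n => (1 : F))).rank :=
      aux_rank_ge G hMDS hkn Finset.univ _ (fun _ _ => rfl)
    rw [Matrix.diagonal_one, Matrix.mul_one] at h2
    simp only [Finset.card_univ, Fintype.card_fin] at h2
    omega
  -- vecMulLinear G is injective
  have hrkG := LinearMap.finrank_range_add_finrank_ker (Matrix.vecMulLinear G)
  rw [range_vecMulLinear, ← Matrix.rank_eq_finrank_span_row, hGrank] at hrkG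
  have hdomk : finrank F (Fin k → F) = k := by
    simp [Module.finrank_fintype_fun_eq_card]
  rw [hdomk] at hrkG
  have hkerG : LinearMap.ker (Matrix.vecMulLinear G) = ⊥ := by
    rw [← Submodule.finrank_eq_zero (R := F)]
    omega
  have hinjG : Function.Injective (Matrix.vecMulLinear G) :=
    LinearMap.ker_eq_bot.mp hkerG
  -- kernel of x ↦ x ᵥ* Hᵀ
  set K := LinearMap.ker (H.transpose.vecMulLinear) with hK
  have hrkH := LinearMap.finrank_range_add_finrank_ker (H.transpose.vecMulLinear)
  have hrange_eq : LinearMap.range (H.transpose.vecMulLinear)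
      = LinearMap.range H.mulVecLin := by rw [Matrix.vecMulLinear_transpose]
  have hranH : finrank F (LinearMap.range H.mulVecLin) = n - k := hH
  have hdomn : finrank F (Fin n → F) = n := by
    simp [Module.finrank_fintype_fun_eq_card]
  rw [hrange_eq, hranH, hdomn] at hrkH
  have hfinK : finrank F K = k := by
    rw [hK]
    omega
  -- rows of M with M * Hᵀ = 0 are in K
  have hrowK : ∀ (M : Matrix (Fin k) (Fin n) F), M * H.transpose = 0 →
      ∀ i, M i ∈ K := by
    intro M hM i
    show H.transpose.vecMulLinear (M i) = 0
    rw [Matrix.vecMulLinear_apply, ← hrow M H.transpose i, hM]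
    rfl
  -- row space of G equals K
  set R0 := Submodule.span F (Set.range G) with hR0
  have hR0K : R0 ≤ K := by
    rw [hR0, Submodule.span_le]
    rintro _ ⟨i, rfl⟩
    exact hrowK G hGH i
  have hfinR0 : finrank F R0 = k := by
    show finrank F (Submodule.span F (Set.range G.row)) = k
    rw [← Matrix.rank_eq_finrank_span_row, hGrank]
  have hR0eq : R0 = K :=
    Submodule.eq_of_le_of_finrank_le hR0K (by rw [hfinK, hfinR0])
  -- the two masked matrices have rows that are codewords
  have hA0 : (G * Dm) * H.transpose = 0 := h0
  have hGsplit : G * Dm + G * Dm' = G := by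
    rw [← Matrix.mul_add, hsum, Matrix.mul_one]
  have hB0 : (G * Dm') * H.transpose = 0 := by
    have h := congrArg (fun M => M * H.transpose) hGsplit
    simp only [Matrix.add_mul] at h
    rw [hA0, hGH, zero_add] at h
    exact h
  -- extract coefficient matrices P, Q
  have hexists : ∀ (M : Matrix (Fin k) (Fin n) F), M * H.transpose = 0 →
      ∃ P : Matrix (Fin k) (Fin k) F, P * G = M := by
    intro M hM
    have hmem : ∀ i, M i ∈ LinearMap.range (Matrix.vecMulLinear G) := by
      intro i
      rw [range_vecMulLinear]
      change M i ∈ R0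
      rw [hR0eq]
      exact hrowK M hM i
    choose p hp using hmem
    refine ⟨Matrix.of fun i => p i, ?_⟩
    ext i j
    rw [Matrix.mul_apply]
    have := congrFun (hp i) j
    simpa [Matrix.vecMulLinear_apply, Matrix.vecMul, dotProduct] using this
  obtain ⟨P, hPG⟩ := hexists (G * Dm) hA0
  obtain ⟨Q, hQG⟩ := hexists (G * Dm') hB0
  -- P + Q = 1
  have hPQ : P + Q = (1 : Matrix (Fin k) (Fin k) F) := by
    have hmul : (P + Q) * G = (1 : Matrix (Fin k) (Fin k) F) * G := by
      rw [Matrix.add_mul, hPG, hQG, Matrix.one_mul, hGsplit]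
    funext i
    apply hinjG
    rw [Matrix.vecMulLinear_apply, Matrix.vecMulLinear_apply,
      ← hrow (P + Q) G i, ← hrow (1 : Matrix (Fin k) (Fin k) F) G i, hmul]
  -- rank inequalities
  have e1 : P * (G * Dm') = 0 := by
    rw [← Matrix.mul_assoc, hPG, Matrix.mul_assoc, hprod, Matrix.mul_zero]
  have e2 : Q * (G * Dm) = 0 := by
    rw [← Matrix.mul_assoc, hQG, Matrix.mul_assoc, hprod', Matrix.mul_zero]
  have r1 := Matrix.rank_add_rank_le_card_of_mul_eq_zero e1
  have r2 := Matrix.rank_add_rank_le_card_of_mul_eq_zero e2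
  rw [Fintype.card_fin] at r1 r2
  have r3 : k ≤ P.rank + Q.rank := by
    have h := aux_rank_add P Q
    rw [hPQ, Matrix.rank_one, Fintype.card_fin] at h
    exact h
  have r4 : min k (Sᶜ.card) ≤ (G * Dm').rank := by
    refine aux_rank_ge G hMDS hkn Sᶜ d2 ?_
    intro j hj
    rw [Finset.mem_compl] at hj
    simp [hd2, hj]
  have r5 : min k S.card ≤ (G * Dm).rank := by
    refine aux_rank_ge G hMDS hkn S d1 ?_
    intro j hj
    simp [hd1, hj]
  have hcompl : Sᶜ.card = n - S.card := by
    rw [Finset.card_compl, Fintype.card_fin]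
  have hs1 : 1 ≤ S.card := Finset.card_pos.mpr ⟨i0, ‹i0 ∈ S›⟩
  have hs2 : S.card < n := by
    have := (Finset.card_lt_iff_ne_univ S).mpr hSne
    simpa using this
  rw [hcompl] at r4
  omega
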